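/- Let N ≥ 2. The vector Ψ = e_0 ⊗ e_1^{⊗(N−1)} − e_1 ⊗ e_0^{⊗(N−1)} ∈ (ℂ²)^{⊗N} is genuinely multiparty entangled: Ψ ≠ 0 and for every nonempty proper subset S ⊂ {1,…,N} there exist no vectors φ ∈ ⨂_{i∈S} ℂ² and χ ∈ ⨂_{i∉S} ℂ² with Ψ = φ ⊗ χ under the canonical factor-reordering isomorphism. -/

import Mathlib

noncomputable section

/-- The `N`-qudit Hilbert space `(ℂ^d)^{⊗N}`, realized as the Euclidean space whose
coordinates are indexed by tuples of local indices. -/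
abbrev QSpace (N d : ℕ) := EuclideanSpace ℂ (Fin N → Fin d)

/-- `v` is biproduct: for some bipartition `S|Sᶜ` of the parties, `v = φ ⊗ χ` with
`φ` a vector on the parties in `S` and `χ` a vector on the parties in `Sᶜ`
(under the canonical factor-reordering isomorphism). -/
def Biproduct {N d : ℕ} (v : QSpace N d) : Prop :=
  ∃ S : Set (Fin N), S.Nonempty ∧ S ≠ Set.univ ∧
    ∃ (φ : ((i : S) → Fin d) → ℂ) (χ : ((i : ↥Sᶜ) → Fin d) → ℂ),
      ∀ f : Fin N → Fin d, v f = φ (fun i => f i) * χ (fun i => f i)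

/-- A vector is genuinely multiparty entangled if it is nonzero and not biproduct. -/
def GME {N d : ℕ} (v : QSpace N d) : Prop :=
  v ≠ 0 ∧ ¬ Biproduct v

/-- A genuinely entangled subspace: all its nonzero vectors are GME. -/
def IsGES {N d : ℕ} (G : Submodule ℂ (QSpace N d)) : Prop :=
  ∀ v ∈ G, v ≠ 0 → GME v

/-- The standard basis vector of `(ℂ²)^{⊗N}` with local indices given by `x`. -/
def bvec {N : ℕ} (x : Fin N → Fin 2) : QSpace N 2 :=
  WithLp.toLp 2 (fun f => if f = x then 1 else 0)

/-- For `N = n + 2 ≥ 2`, the vector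
`Ψ = e₀ ⊗ e₁^{⊗(N-1)} − e₁ ⊗ e₀^{⊗(N-1)} ∈ (ℂ²)^{⊗N}` is genuinely multiparty entangled:
it is nonzero and admits no product decomposition `φ ⊗ χ` across any bipartition. -/
theorem stmt18 (n : ℕ) :
    (bvec (fun i : Fin (n + 2) => if i = 0 then 0 else 1)
      - bvec (fun i : Fin (n + 2) => if i = 0 then 1 else 0)) ≠ 0 ∧
    ∀ S : Set (Fin (n + 2)), S.Nonempty → S ≠ Set.univ →
      ¬ ∃ (φ : ((i : S) → Fin 2) → ℂ) (χ : ((i : ↥Sᶜ) → Fin 2) → ℂ),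
        ∀ f : Fin (n + 2) → Fin 2,
          (bvec (fun i : Fin (n + 2) => if i = 0 then 0 else 1)
            - bvec (fun i : Fin (n + 2) => if i = 0 then 1 else 0)) f
            = φ (fun i => f i) * χ (fun i => f i) := by
  classical
  set a : Fin (n + 2) → Fin 2 := fun i => if i = 0 then 0 else 1 with ha
  set b : Fin (n + 2) → Fin 2 := fun i => if i = 0 then 1 else 0 with hb
  have hab : ∀ i, a i ≠ b i := by
    intro i
    by_cases h : i = 0 <;> simp [ha, hb, h]
  have hne : a ≠ b := fun h => hab 0 (congrFun h 0)
  have heval : ∀ f, (bvec a - bvec b) f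
      = (if f = a then (1 : ℂ) else 0) - (if f = b then 1 else 0) := fun f => rfl
  constructor
  · intro h
    have h1 : (bvec a - bvec b) a = 0 := congrArg (fun v : QSpace (n + 2) 2 => v a) h
    rw [heval] at h1
    simp [hne] at h1
  · rintro S hS hSU ⟨φ, χ, h⟩
    obtain ⟨i0, hi0⟩ := hS
    obtain ⟨j0, hj0⟩ : ∃ j, j ∉ S := by
      by_contra hc
      push_neg at hc
      exact hSU (Set.eq_univ_of_forall hc)
    set m1 : Fin (n + 2) → Fin 2 := fun k => if k ∈ S then a k else b k with hm1
    set m2 : Fin (n + 2) → Fin 2 := fun k => if k ∈ S then b k else a k with hm2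
    have hm1a : m1 ≠ a := fun h => hab j0 ((by simpa [hm1, hj0] using (congrFun h j0).symm))
    have hm1b : m1 ≠ b := fun h => hab i0 (by simpa [hm1, hi0] using congrFun h i0)
    have hm2a : m2 ≠ a := fun h => hab i0 (by simpa [hm2, hi0] using (congrFun h i0).symm)
    have hm2b : m2 ≠ b := fun h => hab j0 (by simpa [hm2, hj0] using congrFun h j0)
    have rS1 : (fun i : S => m1 i) = (fun i : S => a i) := by
      funext i; simp [hm1, i.2]
    have rC1 : (fun i : ↥Sᶜ => m1 i) = (fun i : ↥Sᶜ => b i) := by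
      funext i; have hi : (i : Fin (n + 2)) ∉ S := i.2; simp [hm1, hi]
    have rS2 : (fun i : S => m2 i) = (fun i : S => b i) := by
      funext i; simp [hm2, i.2]
    have rC2 : (fun i : ↥Sᶜ => m2 i) = (fun i : ↥Sᶜ => a i) := by
      funext i; have hi : (i : Fin (n + 2)) ∉ S := i.2; simp [hm2, hi]
    have e1 : φ (fun i : S => a i) * χ (fun i : ↥Sᶜ => a i) = 1 := by
      have := h a; rw [heval] at this; simp [hne] at this; linear_combination -this
    have e2 : φ (fun i : S => b i) * χ (fun i : ↥Sᶜ => b i) = -1 := by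
      have := h b; rw [heval] at this; simp [hne.symm] at this; linear_combination -this
    have e3 : φ (fun i : S => a i) * χ (fun i : ↥Sᶜ => b i) = 0 := by
      have := h m1; rw [heval, rS1, rC1] at this; simpa [hm1a, hm1b] using this.symm
    have e4 : φ (fun i : S => b i) * χ (fun i : ↥Sᶜ => a i) = 0 := by
      have := h m2; rw [heval, rS2, rC2] at this; simpa [hm2a, hm2b] using this.symm
    have hφ : φ (fun i : S => a i) ≠ 0 := fun h0 => by simp [h0] at e1
    have hχ : χ (fun i : ↥Sᶜ => b i) = 0 := by
      rcases mul_eq_zero.mp e3 with h0 | h0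
      · exact absurd h0 hφ
      · exact h0
    rw [hχ, mul_zero] at e2
    norm_num at e2
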